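/- Let v be a monic polynomial of degree q ≥ 1 with real coefficients and let g > 0 be such that all 2q zeros of v² - 4g are real and simple. Then the set σ = {λ ∈ ℝ : v(λ)² ≤ 4g} is a disjoint union of q closed intervals [a_1, b_1], …, [a_q, b_q] with a_1 < b_1 < a_2 < … < a_q < b_q; the function ρ(λ) = |v'(λ)| √(4g - v(λ)²) / (2πgq) for λ ∈ σ (and ρ = 0 off σ) is a probability density on ℝ; and each interval carries equal mass: ∫_{a_l}^{b_l} ρ(λ) dλ = 1/q for every l = 1, …, q. Consequently the charges β_l = ∫_{a_{l+1}}^{∞} ρ(λ) dλ satisfy β_l = (q - l)/q for l = 1, …, q-1. -/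

import Mathlib

open MeasureTheory

/-- The density `ρ(λ) = |v'(λ)| √(4g - v(λ)²) / (2πgq)` on
`σ = {λ : v(λ)² ≤ 4g}`, extended by `0`. -/
noncomputable def bpDensity (q : ℕ) (v : Polynomial ℝ) (g : ℝ) (lam : ℝ) : ℝ :=
  if (v.eval lam) ^ 2 ≤ 4 * g then
    |(Polynomial.derivative v).eval lam| * Real.sqrt (4 * g - (v.eval lam) ^ 2) /
      (2 * Real.pi * g * q)
  else 0

open Polynomial Finset





private lemma prod_sign_neg {ι : Type*} (s : Finset ι) (f : ι → ℝ) :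
    ∏ i ∈ s, f i = (-1) ^ s.card * ∏ i ∈ s, (-f i) := by
  rw [← Finset.prod_const, ← Finset.prod_mul_distrib]; simp

private lemma card_filter_ge_fin (n m : ℕ) (h : m ≤ n) :
    ((Finset.univ : Finset (Fin n)).filter fun i : Fin n => m ≤ (i : ℕ)).card = n - m := by
  have h2 : ((Finset.univ : Finset (Fin n)).filter fun i : Fin n => (i : ℕ) < m).card = m := by
    have heq : ((Finset.univ : Finset (Fin n)).filter fun i : Fin n => (i : ℕ) < m) =
        Finset.map (Fin.castLEEmb h) Finset.univ := by
      ext i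
      simp only [Finset.mem_filter, Finset.mem_univ, true_and, Finset.mem_map]
      constructor
      · intro hi; exact ⟨⟨i, hi⟩, rfl⟩
      · rintro ⟨j, rfl⟩; exact j.2
    rw [heq, Finset.card_map, Finset.card_univ, Fintype.card_fin]
  have h3 := Finset.card_filter_add_card_filter_not
    (s := (Finset.univ : Finset (Fin n))) (p := fun i : Fin n => (i : ℕ) < m)
  simp only [not_lt] at h3
  rw [Finset.card_univ, Fintype.card_fin] at h3
  omega

private lemma band_structure (q : ℕ) (hq : 1 ≤ q) (p : ℝ[X]) (hpm : p.Monic)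
    (hpdeg : p.natDegree = 2 * q) (hnodup : p.roots.Nodup)
    (hcard : Multiset.card p.roots = 2 * q) :
    ∃ r : Fin (2 * q) → ℝ, StrictMono r ∧
      (∀ x : ℝ, (p.eval x = 0 ↔ ∃ i, r i = x)) ∧
      (∀ x : ℝ, p.eval x ≤ 0 ↔ ∃ l : Fin q,
        x ∈ Set.Icc (r ⟨2 * l, by have := l.2; omega⟩) (r ⟨2 * l + 1, by have := l.2; omega⟩)) := by
  classical
  set R : Finset ℝ := ⟨p.roots, hnodup⟩ with hRdef
  have hRcard : R.card = 2 * q := hcard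
  set e := R.orderIsoOfFin hRcard with he
  set r : Fin (2 * q) → ℝ := fun i => (e i : ℝ) with hrdef
  have hrmono : StrictMono r := fun i j hij => Subtype.coe_lt_coe.mpr (e.strictMono hij)
  have hrle : ∀ (i j : Fin (2 * q)), (i : ℕ) ≤ (j : ℕ) → r i ≤ r j := by
    intro i j hij
    exact hrmono.monotone (by exact hij)
  -- root characterization
  have hrootmem : ∀ x : ℝ, p.eval x = 0 ↔ ∃ i, r i = x := by
    intro x
    constructor
    · intro hx
      have hxR : x ∈ R := by
        show x ∈ p.roots
        rw [Polynomial.mem_roots hpm.ne_zero]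
        exact hx
      obtain ⟨i, hi⟩ := e.surjective ⟨x, hxR⟩
      exact ⟨i, congrArg Subtype.val hi⟩
    · rintro ⟨i, rfl⟩
      have : (e i : ℝ) ∈ R := (e i).2
      have : (e i : ℝ) ∈ p.roots := this
      rw [Polynomial.mem_roots hpm.ne_zero] at this
      exact this
  -- product formula
  have hsplits : p.Splits := by
    rw [Polynomial.splits_iff_card_roots, hcard, hpdeg]
  have heval : ∀ x : ℝ, p.eval x = ∏ i : Fin (2 * q), (x - r i) := by
    intro x
    conv_lhs => rw [hsplits.eq_prod_roots_of_monic hpm]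
    rw [Polynomial.eval_multiset_prod, Multiset.map_map]
    have h1 : (p.roots.map fun a => Polynomial.eval x (X - C a)).prod
        = ∏ a ∈ R, (x - a) := by
      rw [Finset.prod]
      congr 1
      apply Multiset.map_congr rfl
      intro a _
      simp
    simp only [Function.comp] at h1 ⊢
    rw [h1, ← Finset.prod_coe_sort R (fun a => x - a)]
    exact (Equiv.prod_comp e.toEquiv (fun a => x - (a : ℝ))).symm
  refine ⟨r, hrmono, hrootmem, ?_⟩
  have key1 : ∀ x : ℝ, ∀ l : Fin q,
      r ⟨2 * l, by have := l.2; omega⟩ ≤ x → x ≤ r ⟨2 * l + 1, by have := l.2; omega⟩ →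
      p.eval x ≤ 0 := by
    intro x l h1 h2
    have hl2 := l.2
    rw [heval x,
      ← Finset.prod_filter_mul_prod_filter_not Finset.univ (fun i : Fin (2*q) => (i : ℕ) < 2 * l + 1)]
    have hA : 0 ≤ ∏ i ∈ Finset.univ.filter (fun i : Fin (2*q) => (i : ℕ) < 2 * l + 1), (x - r i) := by
      apply Finset.prod_nonneg
      intro i hi
      rw [Finset.mem_filter] at hi
      have : r i ≤ r ⟨2 * l, by omega⟩ := hrle _ _ (by simpa using Nat.lt_succ_iff.mp hi.2)
      linarith
    have hB : (∏ i ∈ Finset.univ.filter (fun i : Fin (2*q) => ¬((i : ℕ) < 2 * l + 1)), (x - r i)) ≤ 0 := by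
      have hset : (Finset.univ.filter (fun i : Fin (2*q) => ¬((i : ℕ) < 2 * l + 1)))
          = Finset.univ.filter (fun i : Fin (2*q) => 2 * l + 1 ≤ (i : ℕ)) := by
        apply Finset.filter_congr; intro i _; simp [not_lt]
      rw [hset, prod_sign_neg, card_filter_ge_fin _ _ (by omega)]
      have hodd : Odd (2 * q - (2 * (l : ℕ) + 1)) := by
        rw [Nat.odd_iff]; omega
      rw [hodd.neg_one_pow]
      have : 0 ≤ ∏ i ∈ Finset.univ.filter (fun i : Fin (2*q) => 2 * l + 1 ≤ (i : ℕ)), -(x - r i) := by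
        apply Finset.prod_nonneg
        intro i hi
        rw [Finset.mem_filter] at hi
        have : r ⟨2 * l + 1, by omega⟩ ≤ r i := hrle _ _ (by simpa using hi.2)
        linarith
      linarith
    exact mul_nonpos_iff.mpr (Or.inl ⟨hA, hB⟩)
  intro x
  constructor
  · intro hple
    by_contra hx
    push_neg at hx
    simp only [Set.mem_Icc, not_and, not_le] at hx
    have hpos : 0 < p.eval x := by
      rw [heval x]
      by_cases h0 : x < r ⟨0, by omega⟩
      · rw [prod_sign_neg]
        have hcardu : (Finset.univ : Finset (Fin (2*q))).card = 2*q := by simp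
        rw [hcardu, (even_two_mul q).neg_one_pow, one_mul]
        apply Finset.prod_pos
        intro i _
        have : r ⟨0, by omega⟩ ≤ r i := hrle _ _ (by simp)
        simp only [neg_sub]
        linarith
      push_neg at h0
      set T := Finset.univ.filter (fun i : Fin (2*q) => r i ≤ x) with hT
      have hTne : T.Nonempty := ⟨⟨0, by omega⟩, by simp [hT, h0]⟩
      set j := T.max' hTne with hj
      have hj1 : r j ≤ x := by
        have := T.max'_mem hTne
        simp only [hT, Finset.mem_filter] at this
        exact this.2
      have hj2 : ∀ i : Fin (2*q), r i ≤ x → (i : ℕ) ≤ (j : ℕ) := by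
        intro i hi
        exact T.le_max' i (by simp [hT, hi])
      have hxltsucc : ∀ h : (j : ℕ) + 1 < 2 * q, x < r ⟨(j : ℕ) + 1, h⟩ := by
        intro h
        by_contra hc
        push_neg at hc
        have := hj2 ⟨(j : ℕ) + 1, h⟩ hc
        simp at this
      rcases Nat.even_or_odd (j : ℕ) with hev | hod
      · -- even j = 2l : contradiction with hx
        exfalso
        obtain ⟨l, hl⟩ := hev
        have hlq : l < q := by have := j.2; omega
        have hjeq : j = (⟨2 * l, by omega⟩ : Fin (2 * q)) := by
          apply Fin.ext; simp; omega
        have h1 : r ⟨2 * l, by omega⟩ ≤ x := by rw [← hjeq]; exact hj1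
        have h2 : x < r ⟨2 * l + 1, by omega⟩ := by
          have h2q : (j : ℕ) + 1 < 2 * q := by omega
          have := hxltsucc h2q
          have heq2 : (⟨(j : ℕ) + 1, h2q⟩ : Fin (2 * q)) = ⟨2 * l + 1, by omega⟩ := by
            apply Fin.ext; simp; omega
          rwa [heq2] at this
        exact absurd h2 (not_lt.mpr (le_of_lt (hx ⟨l, hlq⟩ h1)))
      · -- odd j = 2l+1
        obtain ⟨l, hl⟩ := hod
        have hlq : l < q := by have := j.2; omega
        have hjeq : j = (⟨2 * l + 1, by omega⟩ : Fin (2 * q)) := by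
          apply Fin.ext; simp; omega
        have h3 : (⟨2 * l + 1, by omega⟩ : Fin (2 * q)) = j := Fin.ext (by simp [hl])
        have hxne : x ≠ r j := by
          intro hxe
          have h1 : r ⟨2 * l, by omega⟩ ≤ x := by
            refine le_of_le_of_eq ?_ hxe.symm
            exact hrle _ _ (by simp [hl])
          have h2 := hx ⟨l, hlq⟩ h1
          rw [h3, ← hxe] at h2
          exact lt_irrefl _ h2
        have hjx : r j < x := lt_of_le_of_ne hj1 (fun h => hxne h.symm)
        rw [← Finset.prod_filter_mul_prod_filter_not Finset.univ
          (fun i : Fin (2*q) => (i : ℕ) < (j : ℕ) + 1)]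
        apply mul_pos
        · apply Finset.prod_pos
          intro i hi
          rw [Finset.mem_filter] at hi
          have : r i ≤ r j := hrle _ _ (by omega)
          linarith
        · by_cases hjtop : (j : ℕ) + 1 < 2 * q
          swap
          · -- the filter is empty
            have hempty : (Finset.univ.filter (fun i : Fin (2*q) => ¬((i : ℕ) < (j : ℕ) + 1))) = ∅ := by
              apply Finset.filter_false_of_mem
              intro i _
              push_neg
              have := i.2; omega
            rw [hempty, Finset.prod_empty]; norm_num
          have hjx2 : x < r ⟨(j : ℕ) + 1, hjtop⟩ := hxltsucc hjtop
          have hset : (Finset.univ.filter (fun i : Fin (2*q) => ¬((i : ℕ) < (j : ℕ) + 1)))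
              = Finset.univ.filter (fun i : Fin (2*q) => (j : ℕ) + 1 ≤ (i : ℕ)) := by
            apply Finset.filter_congr; intro i _; simp [not_lt]
          rw [hset, prod_sign_neg, card_filter_ge_fin _ _ (by omega)]
          have heven : Even (2 * q - ((j : ℕ) + 1)) := by
            rw [Nat.even_iff]; omega
          rw [heven.neg_one_pow, one_mul]
          apply Finset.prod_pos
          intro i hi
          rw [Finset.mem_filter] at hi
          have : r ⟨(j : ℕ) + 1, hjtop⟩ ≤ r i := hrle _ _ (by simpa using hi.2)
          linarith
    linarith
  · rintro ⟨l, hl⟩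
    rw [Set.mem_Icc] at hl
    exact key1 x l hl.1 hl.2

private lemma enum_roots (n : ℕ) (w : ℝ[X]) (hw : w ≠ 0) (hnodup : w.roots.Nodup)
    (hcard : Multiset.card w.roots = n) :
    ∃ γ : Fin n → ℝ, StrictMono γ ∧ ∀ x : ℝ, (w.eval x = 0 ↔ ∃ i, γ i = x) := by
  classical
  set R : Finset ℝ := ⟨w.roots, hnodup⟩ with hRdef
  have hRcard : R.card = n := hcard
  set e := R.orderIsoOfFin hRcard with he
  refine ⟨fun i => (e i : ℝ), fun i j hij => Subtype.coe_lt_coe.mpr (e.strictMono hij), ?_⟩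
  intro x
  constructor
  · intro hx
    have hxR : x ∈ R := by
      show x ∈ w.roots
      rw [Polynomial.mem_roots hw]
      exact hx
    obtain ⟨i, hi⟩ := e.surjective ⟨x, hxR⟩
    exact ⟨i, congrArg Subtype.val hi⟩
  · rintro ⟨i, rfl⟩
    have : (e i : ℝ) ∈ w.roots := (e i).2
    rw [Polynomial.mem_roots hw] at this
    exact this

/-- Between any two consecutive roots of `w` there is exactly one root of `derivative v`,
and every root of `derivative v` arises this way. -/
private lemma gap_lemma (q : ℕ) (hq2 : 2 ≤ q) (v w : ℝ[X])
    (hvw : derivative w = derivative v) (hwdeg : w.natDegree = q)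
    (hnodup : w.roots.Nodup) (hcard : Multiset.card w.roots = q) :
    ∃ γ : Fin q → ℝ, StrictMono γ ∧ (∀ x : ℝ, (w.eval x = 0 ↔ ∃ i, γ i = x)) ∧
      (∀ x : ℝ, (derivative v).eval x = 0 → ∃ l : ℕ, ∃ hl : l + 1 < q,
        γ ⟨l, by omega⟩ < x ∧ x < γ ⟨l + 1, hl⟩ ∧
        (∀ y : ℝ, (derivative v).eval y = 0 → γ ⟨l, by omega⟩ < y → y < γ ⟨l + 1, hl⟩ → y = x)) := by
  classical
  have hw0 : w ≠ 0 := by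
    intro h
    rw [h] at hwdeg
    simp at hwdeg; omega
  obtain ⟨γ, hγmono, hγroot⟩ := enum_roots q w hw0 hnodup hcard
  have hv'0 : derivative v ≠ 0 := by
    intro h
    rw [← hvw] at h
    have := Polynomial.natDegree_eq_zero_of_derivative_eq_zero h
    omega
  have hv'deg : (derivative v).natDegree ≤ q - 1 := by
    rw [← hvw]
    simpa [hwdeg] using Polynomial.natDegree_derivative_le w
  -- Rolle root in each gap
  have hrolle : ∀ l : Fin (q - 1), ∃ z : ℝ,
      γ ⟨l, by have := l.2; omega⟩ < z ∧ z < γ ⟨l + 1, by have := l.2; omega⟩ ∧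
      (derivative v).eval z = 0 := by
    intro l
    have hl2 := l.2
    have hab : γ ⟨l, by omega⟩ < γ ⟨l + 1, by omega⟩ := hγmono (by simp [Fin.lt_def])
    have hfa : w.eval (γ ⟨l, by omega⟩) = 0 := (hγroot _).mpr ⟨_, rfl⟩
    have hfb : w.eval (γ ⟨l + 1, by omega⟩) = 0 := (hγroot _).mpr ⟨_, rfl⟩
    obtain ⟨z, hz, hz0⟩ := exists_deriv_eq_zero (f := fun t => w.eval t) hab
      (Continuous.continuousOn (Polynomial.continuous w)) (by show Polynomial.eval _ w = Polynomial.eval _ w; rw [hfa, hfb])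
    refine ⟨z, hz.1, hz.2, ?_⟩
    rw [← hvw]
    have := Polynomial.deriv (x := z) w
    rw [hz0] at this
    exact this.symm
  choose d hd1 hd2 hd3 using hrolle
  have hdmono : StrictMono d := by
    intro l m hlm
    have h1 : d l < γ ⟨(l : ℕ) + 1, by have := l.2; omega⟩ := hd2 l
    have h2 : γ ⟨(m : ℕ), by have := m.2; omega⟩ < d m := hd1 m
    have h3 : γ ⟨(l : ℕ) + 1, by have := l.2; omega⟩ ≤ γ ⟨(m : ℕ), by have := m.2; omega⟩ :=
      hγmono.monotone (by simp [Fin.le_def]; omega)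
    linarith
  -- all roots of v' are the d l
  have hD : ∀ x : ℝ, (derivative v).eval x = 0 → ∃ l : Fin (q - 1), d l = x := by
    intro x hx
    set D : Finset ℝ := (derivative v).roots.toFinset with hDdef
    have hsub : Finset.image d Finset.univ ⊆ D := by
      intro z hz
      rw [Finset.mem_image] at hz
      obtain ⟨l, -, rfl⟩ := hz
      rw [hDdef, Multiset.mem_toFinset, Polynomial.mem_roots hv'0]
      exact hd3 l
    have hcard1 : (Finset.image d Finset.univ).card = q - 1 := by
      rw [Finset.card_image_of_injective _ hdmono.injective, Finset.card_univ, Fintype.card_fin]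
    have hcard2 : D.card ≤ q - 1 :=
      le_trans (Multiset.toFinset_card_le _) (le_trans (Polynomial.card_roots' _) hv'deg)
    have heq : Finset.image d Finset.univ = D :=
      Finset.eq_of_subset_of_card_le hsub (by omega)
    have hxD : x ∈ D := by
      rw [hDdef, Multiset.mem_toFinset, Polynomial.mem_roots hv'0]
      exact hx
    rw [← heq, Finset.mem_image] at hxD
    obtain ⟨l, -, hl⟩ := hxD
    exact ⟨l, hl⟩
  refine ⟨γ, hγmono, hγroot, ?_⟩
  intro x hx
  obtain ⟨l, hl⟩ := hD x hx
  have hl2 := l.2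
  refine ⟨(l : ℕ), by omega, by rw [← hl]; exact hd1 l, by rw [← hl]; exact hd2 l, ?_⟩
  intro y hy hy1 hy2
  obtain ⟨m, hm⟩ := hD y hy
  have hm2 := m.2
  -- show m = l
  rcases lt_trichotomy (m : ℕ) (l : ℕ) with h | h | h
  · exfalso
    have : d m < γ ⟨(m : ℕ) + 1, by omega⟩ := hd2 m
    have h3 : γ ⟨(m : ℕ) + 1, by omega⟩ ≤ γ ⟨(l : ℕ), by omega⟩ := hγmono.monotone (by simp [Fin.le_def]; omega)
    rw [hm] at this
    linarith
  · rw [← hl, ← hm]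
    congr 1
    exact Fin.ext h
  · exfalso
    have : γ ⟨(m : ℕ), by omega⟩ < d m := hd1 m
    have h3 : γ ⟨(l : ℕ) + 1, by omega⟩ ≤ γ ⟨(m : ℕ), by omega⟩ := hγmono.monotone (by simp [Fin.le_def]; omega)
    rw [hm] at this
    linarith

/-- If `v'` has no zero in `(a,b)`, then on `(a,b)` the values of `v` lie strictly between
the endpoint values. -/
private lemma between_lemma (v : ℝ[X]) (a b : ℝ) (hab : a < b)
    (hnc : ∀ y ∈ Set.Ioo a b, (derivative v).eval y ≠ 0) (t : ℝ) (ht : t ∈ Set.Ioo a b) :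
    min (v.eval a) (v.eval b) < v.eval t ∧ v.eval t < max (v.eval a) (v.eval b) := by
  have hsign : (∀ y ∈ Set.Ioo a b, 0 < (derivative v).eval y) ∨
      (∀ y ∈ Set.Ioo a b, (derivative v).eval y < 0) := by
    by_contra h
    push_neg at h
    obtain ⟨⟨y1, hy1, hy1'⟩, ⟨y2, hy2, hy2'⟩⟩ := h
    have h1 : (derivative v).eval y1 < 0 := lt_of_le_of_ne hy1' (hnc y1 hy1)
    have h2 : 0 < (derivative v).eval y2 := lt_of_le_of_ne hy2' (Ne.symm (hnc y2 hy2))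
    have hcont : ContinuousOn (fun x => (derivative v).eval x) (Set.uIcc y1 y2) :=
      (Polynomial.continuous _).continuousOn
    have h0 : (0:ℝ) ∈ Set.uIcc ((derivative v).eval y1) ((derivative v).eval y2) := by
      rw [Set.mem_uIcc]; left; exact ⟨le_of_lt h1, le_of_lt h2⟩
    obtain ⟨z, hz, hz0⟩ := intermediate_value_uIcc hcont h0
    have hzab : z ∈ Set.Ioo a b := by
      have : Set.uIcc y1 y2 ⊆ Set.Ioo a b := Set.ordConnected_Ioo.uIcc_subset hy1 hy2
      exact this hz
    exact hnc z hzab hz0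
  have hcont : ContinuousOn (fun x => v.eval x) (Set.Icc a b) := (Polynomial.continuous v).continuousOn
  rcases hsign with hpos | hneg
  · have hmono : StrictMonoOn (fun x => v.eval x) (Set.Icc a b) := by
      apply strictMonoOn_of_deriv_pos (convex_Icc a b) hcont
      intro x hx
      rw [interior_Icc] at hx
      rw [Polynomial.deriv]
      exact hpos x hx
    have h1 : v.eval a < v.eval t := hmono ⟨le_refl a, le_of_lt hab⟩ ⟨le_of_lt ht.1, le_of_lt ht.2⟩ ht.1
    have h2 : v.eval t < v.eval b := hmono ⟨le_of_lt ht.1, le_of_lt ht.2⟩ ⟨le_of_lt hab, le_refl b⟩ ht.2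
    constructor
    · exact lt_of_le_of_lt (min_le_left _ _) h1
    · exact lt_of_lt_of_le h2 (le_max_right _ _)
  · have hmono : StrictAntiOn (fun x => v.eval x) (Set.Icc a b) := by
      apply strictAntiOn_of_deriv_neg (convex_Icc a b) hcont
      intro x hx
      rw [interior_Icc] at hx
      rw [Polynomial.deriv]
      exact hneg x hx
    have h1 : v.eval t < v.eval a := hmono ⟨le_refl a, le_of_lt hab⟩ ⟨le_of_lt ht.1, le_of_lt ht.2⟩ ht.1
    have h2 : v.eval b < v.eval t := hmono ⟨le_of_lt ht.1, le_of_lt ht.2⟩ ⟨le_of_lt hab, le_refl b⟩ ht.2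
    constructor
    · exact lt_of_le_of_lt (min_le_right _ _) h2
    · exact lt_of_lt_of_le h1 (le_max_left _ _)

/-- Every critical point of `v` has critical value of magnitude at least `c`. -/
private lemma crit_values (q : ℕ) (hq : 1 ≤ q) (v : ℝ[X]) (hmonic : v.Monic)
    (hdeg : v.natDegree = q) (c : ℝ) (hc : 0 < c)
    (h1n : (v - C c).roots.Nodup) (h1c : Multiset.card (v - C c).roots = q)
    (h2n : (v + C c).roots.Nodup) (h2c : Multiset.card (v + C c).roots = q) :
    ∀ x : ℝ, (derivative v).eval x = 0 → c ^ 2 ≤ (v.eval x) ^ 2 := by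
  intro x hx
  by_cases hq1 : q = 1
  · exfalso
    have hv : v = X + C (v.coeff 0) := hmonic.eq_X_add_C (by omega)
    rw [hv] at hx
    simp at hx
  have hq2 : 2 ≤ q := by omega
  obtain ⟨α, hαm, hαroot, hαgap⟩ := gap_lemma q hq2 v (v - C c)
    (by simp) (by rw [Polynomial.natDegree_sub_C, hdeg]) h1n h1c
  obtain ⟨β, hβm, hβroot, hβgap⟩ := gap_lemma q hq2 v (v + C c)
    (by simp) (by rw [Polynomial.natDegree_add_C, hdeg]) h2n h2c
  have hαval : ∀ i, v.eval (α i) = c := by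
    intro i
    have := (hαroot (α i)).mpr ⟨i, rfl⟩
    simp only [Polynomial.eval_sub, Polynomial.eval_C, sub_eq_zero] at this
    exact this
  have hβval : ∀ i, v.eval (β i) = -c := by
    intro i
    have := (hβroot (β i)).mpr ⟨i, rfl⟩
    simp only [Polynomial.eval_add, Polynomial.eval_C, add_eq_zero_iff_eq_neg] at this
    exact this
  by_contra hcon
  push_neg at hcon
  have hlt1 : v.eval x < c := by nlinarith
  have hlt2 : -c < v.eval x := by nlinarith
  obtain ⟨k, hk, hk1, hk2, huniqA⟩ := hαgap x hx
  obtain ⟨j, hj, hj1, hj2, huniqB⟩ := hβgap x hx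
  rcases lt_trichotomy (α ⟨k, by omega⟩) (β ⟨j, by omega⟩) with hlt | heq | hgt
  · -- α_k < β_j < x : use interval (α_k, x)
    have hnc : ∀ y ∈ Set.Ioo (α ⟨k, by omega⟩) x, (derivative v).eval y ≠ 0 := by
      intro y hy hy0
      have := huniqA y hy0 hy.1 (lt_trans hy.2 hk2)
      exact (ne_of_lt hy.2) this
    have hbet := between_lemma v (α ⟨k, by omega⟩) x hk1 hnc (β ⟨j, by omega⟩) ⟨hlt, hj1⟩
    rw [hαval, hβval] at hbet
    have hmin : min c (v.eval x) = v.eval x := min_eq_right (le_of_lt hlt1)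
    rw [hmin] at hbet
    linarith [hbet.1]
  · have h1 := hαval ⟨k, by omega⟩
    have h2 := hβval ⟨j, by omega⟩
    rw [heq] at h1
    rw [h1] at h2
    linarith
  · -- β_j < α_k < x : use interval (β_j, x)
    have hnc : ∀ y ∈ Set.Ioo (β ⟨j, by omega⟩) x, (derivative v).eval y ≠ 0 := by
      intro y hy hy0
      have := huniqB y hy0 hy.1 (lt_trans hy.2 hj2)
      exact (ne_of_lt hy.2) this
    have hbet := between_lemma v (β ⟨j, by omega⟩) x hj1 hnc (α ⟨k, by omega⟩) ⟨hgt, hk1⟩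
    rw [hαval, hβval] at hbet
    have hmax : max (-c) (v.eval x) = v.eval x := max_eq_right (le_of_lt hlt2)
    rw [hmax] at hbet
    linarith [hbet.2]


private lemma bpDensity_eq (q : ℕ) (v : Polynomial ℝ) (g : ℝ) (lam : ℝ) :
    bpDensity q v g lam =
      |(Polynomial.derivative v).eval lam| * Real.sqrt (4 * g - (v.eval lam) ^ 2) /
        (2 * Real.pi * g * q) := by
  unfold bpDensity
  split_ifs with h
  · rfl
  · push_neg at h
    rw [Real.sqrt_eq_zero'.mpr (by linarith), mul_zero, zero_div]

private lemma integral_semicircle (R : ℝ) (hR : 0 < R) :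
    ∫ x in (-R)..R, Real.sqrt (R ^ 2 - x ^ 2) = Real.pi * R ^ 2 / 2 := by
  have key := intervalIntegral.integral_comp_smul_deriv (a := (-1:ℝ)) (b := 1)
    (f := fun u : ℝ => R * u) (f' := fun _ : ℝ => R)
    (g := fun x : ℝ => Real.sqrt (R ^ 2 - x ^ 2))
    (fun u _ => by simpa using (hasDerivAt_id u).const_mul R)
    continuousOn_const
    (Continuous.sqrt (by continuity))
  simp only [Function.comp] at key
  have hlhs : ∫ u in (-1:ℝ)..1, R • Real.sqrt (R ^ 2 - (R * u) ^ 2)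
      = R ^ 2 * ∫ u in (-1:ℝ)..1, Real.sqrt (1 - u ^ 2) := by
    rw [← intervalIntegral.integral_const_mul]
    apply intervalIntegral.integral_congr
    intro u _
    show R • Real.sqrt (R ^ 2 - (R * u) ^ 2) = R ^ 2 * Real.sqrt (1 - u ^ 2)
    have h1 : R ^ 2 - (R * u) ^ 2 = R ^ 2 * (1 - u ^ 2) := by ring
    rw [smul_eq_mul, h1, Real.sqrt_mul (sq_nonneg R), Real.sqrt_sq hR.le]
    ring
  rw [hlhs, integral_sqrt_one_sub_sq] at key
  rw [show R * (-1:ℝ) = -R by ring, show R * (1:ℝ) = R by ring] at key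
  rw [← key]
  ring

private lemma sign_dichotomy (w : Polynomial ℝ) (a b : ℝ)
    (hnc : ∀ x ∈ Set.Icc a b, w.eval x ≠ 0) :
    (∀ x ∈ Set.Icc a b, 0 < w.eval x) ∨ (∀ x ∈ Set.Icc a b, w.eval x < 0) := by
  by_contra h
  push_neg at h
  obtain ⟨⟨y1, hy1, hy1'⟩, ⟨y2, hy2, hy2'⟩⟩ := h
  have h1 : w.eval y1 < 0 := lt_of_le_of_ne hy1' (hnc y1 hy1)
  have h2 : 0 < w.eval y2 := lt_of_le_of_ne hy2' (Ne.symm (hnc y2 hy2))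
  have hcont : ContinuousOn (fun x => w.eval x) (Set.uIcc y1 y2) :=
    (Polynomial.continuous _).continuousOn
  have h0 : (0:ℝ) ∈ Set.uIcc (w.eval y1) (w.eval y2) := by
    rw [Set.mem_uIcc]; left; exact ⟨le_of_lt h1, le_of_lt h2⟩
  obtain ⟨z, hz, hz0⟩ := intermediate_value_uIcc hcont h0
  exact hnc z (Set.ordConnected_Icc.uIcc_subset hy1 hy2 hz) hz0

private lemma band_mass (v : Polynomial ℝ) (g : ℝ) (hg : 0 < g) (a b : ℝ) (hab : a < b)
    (hv' : ∀ x ∈ Set.Icc a b, (Polynomial.derivative v).eval x ≠ 0)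
    (hin : ∀ x ∈ Set.Ioo a b, (v.eval x) ^ 2 < 4 * g)
    (hae : (v.eval a) ^ 2 = 4 * g) (hbe : (v.eval b) ^ 2 = 4 * g) :
    ∫ x in a..b, |(Polynomial.derivative v).eval x| * Real.sqrt (4 * g - (v.eval x) ^ 2)
      = 2 * Real.pi * g := by
  set c : ℝ := 2 * Real.sqrt g with hc
  have hc0 : 0 < c := by positivity
  have hc2 : c ^ 2 = 4 * g := by
    rw [hc, mul_pow, Real.sq_sqrt hg.le]; ring
  have hmid : (a + b) / 2 ∈ Set.Ioo a b := ⟨by linarith, by linarith⟩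
  have hmidlt : (v.eval ((a + b) / 2)) ^ 2 < 4 * g := hin _ hmid
  have hmid1 : -c < v.eval ((a + b) / 2) := by nlinarith
  have hmid2 : v.eval ((a + b) / 2) < c := by nlinarith
  have hva : v.eval a = c ∨ v.eval a = -c := by
    have : (v.eval a - c) * (v.eval a + c) = 0 := by nlinarith
    rcases mul_eq_zero.mp this with h | h
    · left; linarith
    · right; linarith
  have hvb : v.eval b = c ∨ v.eval b = -c := by
    have : (v.eval b - c) * (v.eval b + c) = 0 := by nlinarith
    rcases mul_eq_zero.mp this with h | h
    · left; linarith
    · right; linarith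
  have hsemi : ∫ u in (-c)..c, Real.sqrt (4 * g - u ^ 2) = 2 * Real.pi * g := by
    have : ∀ u : ℝ, Real.sqrt (4 * g - u ^ 2) = Real.sqrt (c ^ 2 - u ^ 2) := by
      intro u; rw [hc2]
    simp_rw [this]
    rw [integral_semicircle c hc0, hc2]
    ring
  have hcv : ∀ (x y : ℝ), ∫ t in x..y, (Polynomial.derivative v).eval t *
      Real.sqrt (4 * g - (v.eval t) ^ 2) = ∫ u in (v.eval x)..(v.eval y), Real.sqrt (4 * g - u ^ 2) := by
    intro x y
    have := intervalIntegral.integral_comp_smul_deriv (a := x) (b := y)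
      (f := fun t : ℝ => v.eval t) (f' := fun t : ℝ => (Polynomial.derivative v).eval t)
      (g := fun u : ℝ => Real.sqrt (4 * g - u ^ 2))
      (fun t _ => v.hasDerivAt t)
      ((Polynomial.continuous _).continuousOn)
      (Continuous.sqrt (by continuity))
    simpa using this
  have hmema : a ∈ Set.Icc a b := Set.left_mem_Icc.mpr hab.le
  have hmemb : b ∈ Set.Icc a b := Set.right_mem_Icc.mpr hab.le
  have hmemm : (a + b) / 2 ∈ Set.Icc a b := Set.mem_Icc_of_Ioo hmid
  rcases sign_dichotomy (Polynomial.derivative v) a b hv' with hpos | hneg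
  · -- v' > 0 : v increasing, v a = -c, v b = c
    have hmono : StrictMonoOn (fun x => v.eval x) (Set.Icc a b) := by
      apply strictMonoOn_of_deriv_pos (convex_Icc a b) ((Polynomial.continuous _).continuousOn)
      intro x hx
      rw [interior_Icc] at hx
      rw [Polynomial.deriv]
      exact hpos x (Set.mem_Icc_of_Ioo hx)
    have hva' : v.eval a = -c := by
      rcases hva with h | h
      · exfalso
        have := hmono hmema hmemm hmid.1
        simp only at this
        rw [h] at this
        linarith
      · exact h
    have hvb' : v.eval b = c := by
      rcases hvb with h | h
      · exact h
      · exfalso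
        have := hmono hmemm hmemb hmid.2
        simp only at this
        rw [h] at this
        linarith
    have heq : ∫ x in a..b, |(Polynomial.derivative v).eval x| * Real.sqrt (4 * g - (v.eval x) ^ 2)
        = ∫ x in a..b, (Polynomial.derivative v).eval x * Real.sqrt (4 * g - (v.eval x) ^ 2) := by
      apply intervalIntegral.integral_congr
      intro x hx
      rw [Set.uIcc_of_le hab.le] at hx
      show |(Polynomial.derivative v).eval x| * _ = _
      rw [abs_of_pos (hpos x hx)]
    rw [heq, hcv a b, hva', hvb', hsemi]
  · -- v' < 0 : v decreasing, v a = c, v b = -c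
    have hmono : StrictAntiOn (fun x => v.eval x) (Set.Icc a b) := by
      apply strictAntiOn_of_deriv_neg (convex_Icc a b) ((Polynomial.continuous _).continuousOn)
      intro x hx
      rw [interior_Icc] at hx
      rw [Polynomial.deriv]
      exact hneg x (Set.mem_Icc_of_Ioo hx)
    have hva' : v.eval a = c := by
      rcases hva with h | h
      · exact h
      · exfalso
        have := hmono hmema hmemm hmid.1
        simp only at this
        rw [h] at this
        linarith
    have hvb' : v.eval b = -c := by
      rcases hvb with h | h
      · exfalso
        have := hmono hmemm hmemb hmid.2
        simp only at this
        rw [h] at this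
        linarith
      · exact h
    have heq : ∫ x in a..b, |(Polynomial.derivative v).eval x| * Real.sqrt (4 * g - (v.eval x) ^ 2)
        = ∫ x in a..b, -((Polynomial.derivative v).eval x * Real.sqrt (4 * g - (v.eval x) ^ 2)) := by
      apply intervalIntegral.integral_congr
      intro x hx
      rw [Set.uIcc_of_le hab.le] at hx
      show |(Polynomial.derivative v).eval x| * _ = _
      rw [abs_of_neg (hneg x hx)]
      ring
    rw [heq, intervalIntegral.integral_neg, hcv a b, hva', hvb',
      ← intervalIntegral.integral_symm, hsemi]

/-- For a monic real polynomial `v` of degree `q` and `g > 0` such that all `2q` zeros of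
`v² - 4g` are real and simple, the set `σ = {λ : v(λ)² ≤ 4g}` is a disjoint union of `q`
closed intervals `[a_1,b_1], …, [a_q,b_q]` with `a_1 < b_1 < a_2 < … < a_q < b_q`, the
density `ρ = |v'| √(4g - v²)/(2πgq)` on `σ` is a probability density, each interval
carries mass `1/q`, and consequently the charges `β_l = ∫_{a_{l+1}}^∞ ρ` equal
`(q-l)/q`. -/
theorem bp_density_equal_masses (q : ℕ) (hq : 1 ≤ q)
    (v : Polynomial ℝ) (hmonic : v.Monic) (hdeg : v.natDegree = q)
    (g : ℝ) (hg : 0 < g)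
    (hsep : (v ^ 2 - Polynomial.C (4 * g)).Separable)
    (hroots : (v ^ 2 - Polynomial.C (4 * g)).roots.card = 2 * q) :
    ∃ a b : Fin q → ℝ,
      (∀ l : Fin q, a l < b l) ∧
      (∀ l : Fin q, ∀ h : (l : ℕ) + 1 < q, b l < a ⟨(l : ℕ) + 1, h⟩) ∧
      ({lam : ℝ | (v.eval lam) ^ 2 ≤ 4 * g} = ⋃ l : Fin q, Set.Icc (a l) (b l)) ∧
      (∀ lam : ℝ, 0 ≤ bpDensity q v g lam) ∧
      (∫ lam : ℝ, bpDensity q v g lam) = 1 ∧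
      (∀ l : Fin q, (∫ lam in Set.Icc (a l) (b l), bpDensity q v g lam) = 1 / q) ∧
      (∀ k : Fin q, 1 ≤ (k : ℕ) →
        (∫ lam in Set.Ici (a k), bpDensity q v g lam) = ((q : ℝ) - (k : ℕ)) / q) := by
  classical
  set c : ℝ := 2 * Real.sqrt g with hcdef
  have hc0 : 0 < c := by positivity
  have hc2 : c ^ 2 = 4 * g := by rw [hcdef, mul_pow, Real.sq_sqrt hg.le]; ring
  set p : ℝ[X] := v ^ 2 - Polynomial.C (4 * g) with hpdef
  have hv2monic : (v ^ 2).Monic := hmonic.pow 2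
  have hvdeg2 : (v ^ 2).natDegree = 2 * q := by rw [Polynomial.natDegree_pow, hdeg]
  have hv2deg : (v ^ 2).degree = (2 * q : ℕ) := by
    rw [Polynomial.degree_eq_natDegree hv2monic.ne_zero, hvdeg2]
  have hpm : p.Monic := by
    rw [hpdef, sub_eq_add_neg]
    apply hv2monic.add_of_left
    apply lt_of_le_of_lt ((Polynomial.degree_neg (Polynomial.C (4 * g))) ▸ Polynomial.degree_C_le)
    rw [hv2deg]
    exact_mod_cast Nat.pos_of_ne_zero (by omega)
  have hpdeg : p.natDegree = 2 * q := by rw [hpdef, Polynomial.natDegree_sub_C, hvdeg2]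
  have hp0 : p ≠ 0 := hpm.ne_zero
  have hnodup : p.roots.Nodup := Polynomial.nodup_roots hsep
  obtain ⟨r, hrmono, hrootmem, hband⟩ := band_structure q hq p hpm hpdeg hnodup hroots
  set A : Fin q → ℝ := fun l => r ⟨2 * l, by have := l.2; omega⟩ with hAdef
  set B : Fin q → ℝ := fun l => r ⟨2 * l + 1, by have := l.2; omega⟩ with hBdef
  have hAB : ∀ l : Fin q, A l < B l := fun l => hrmono (Fin.mk_lt_mk.mpr (by omega))
  have hBA : ∀ l : Fin q, ∀ h : (l : ℕ) + 1 < q, B l < A ⟨(l : ℕ) + 1, h⟩ := by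
    intro l h
    exact hrmono (Fin.mk_lt_mk.mpr (show 2 * (l : ℕ) + 1 < 2 * ((l : ℕ) + 1) by omega))
  have hAmono : ∀ l m : Fin q, (l : ℕ) ≤ (m : ℕ) → A l ≤ A m := by
    intro l m h
    exact hrmono.monotone (Fin.mk_le_mk.mpr (show 2 * (l : ℕ) ≤ 2 * (m : ℕ) by omega))
  have hBmono : ∀ l m : Fin q, (l : ℕ) ≤ (m : ℕ) → B l ≤ B m := by
    intro l m h
    exact hrmono.monotone (Fin.mk_le_mk.mpr (show 2 * (l : ℕ) + 1 ≤ 2 * (m : ℕ) + 1 by omega))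
  have hBltA : ∀ l m : Fin q, (l : ℕ) < (m : ℕ) → B l < A m := by
    intro l m h
    exact hrmono (Fin.mk_lt_mk.mpr (show 2 * (l : ℕ) + 1 < 2 * (m : ℕ) by omega))
  have hpeval : ∀ x : ℝ, p.eval x = (v.eval x) ^ 2 - 4 * g := by
    intro x; rw [hpdef]; simp
  have hσ : {lam : ℝ | (v.eval lam) ^ 2 ≤ 4 * g} = ⋃ l : Fin q, Set.Icc (A l) (B l) := by
    ext x
    simp only [Set.mem_setOf_eq, Set.mem_iUnion]
    constructor
    · intro hx
      exact (hband x).mp (by rw [hpeval]; linarith)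
    · intro hx
      have := (hband x).mpr hx
      rw [hpeval] at this
      linarith
  -- factorization facts
  have hfactor : p = (v - Polynomial.C c) * (v + Polynomial.C c) := by
    rw [hpdef, show (4 : ℝ) * g = c ^ 2 from hc2.symm, Polynomial.C_pow]
    ring
  have hw1deg : (v - Polynomial.C c).natDegree = q := by rw [Polynomial.natDegree_sub_C, hdeg]
  have hw2deg : (v + Polynomial.C c).natDegree = q := by rw [Polynomial.natDegree_add_C, hdeg]
  have hw1ne : v - Polynomial.C c ≠ 0 := by
    intro h; rw [h] at hw1deg; simp at hw1deg; omega
  have hw2ne : v + Polynomial.C c ≠ 0 := by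
    intro h; rw [h] at hw2deg; simp at hw2deg; omega
  have hrootsplit : p.roots = (v - Polynomial.C c).roots + (v + Polynomial.C c).roots := by
    rw [hfactor]
    exact Polynomial.roots_mul (by rw [← hfactor]; exact hp0)
  have hnodup' := hnodup
  rw [hrootsplit] at hnodup'
  obtain ⟨h1n, h2n, -⟩ := Multiset.nodup_add.mp hnodup'
  have hcards : Multiset.card (v - Polynomial.C c).roots
      + Multiset.card (v + Polynomial.C c).roots = 2 * q := by
    rw [← Multiset.card_add, ← hrootsplit, hroots]
  have hcard1le := le_trans (Polynomial.card_roots' (v - Polynomial.C c)) (le_of_eq hw1deg)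
  have hcard2le := le_trans (Polynomial.card_roots' (v + Polynomial.C c)) (le_of_eq hw2deg)
  have hcard1 : Multiset.card (v - Polynomial.C c).roots = q := by omega
  have hcard2 : Multiset.card (v + Polynomial.C c).roots = q := by omega
  have hcrit := crit_values q hq v hmonic hdeg c hc0 h1n hcard1 h2n hcard2
  -- endpoints are not critical points
  have hend : ∀ e : ℝ, p.eval e = 0 → (Polynomial.derivative v).eval e ≠ 0 := by
    intro e hpe hve
    obtain ⟨u, w, huw⟩ := hsep
    have h1 := congrArg (Polynomial.eval e) huw
    simp only [Polynomial.eval_add, Polynomial.eval_mul, Polynomial.eval_one] at h1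
    have hder : (Polynomial.derivative p).eval e = 0 := by
      rw [hpdef]
      simp only [Polynomial.derivative_sub, Polynomial.derivative_C,
        Polynomial.derivative_pow, Polynomial.eval_sub, Polynomial.eval_mul,
        Polynomial.eval_pow, Polynomial.eval_C, sub_zero]
      rw [hve]
      ring
    rw [hpe, hder] at h1
    simp at h1
  -- interior strict inequality
  have hin : ∀ l : Fin q, ∀ x ∈ Set.Ioo (A l) (B l), (v.eval x) ^ 2 < 4 * g := by
    intro l x hx
    have hle : p.eval x ≤ 0 := (hband x).mpr ⟨l, Set.mem_Icc_of_Ioo hx⟩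
    have hne : p.eval x ≠ 0 := by
      intro h
      obtain ⟨i, hi⟩ := (hrootmem x).mp h
      have h1 : r ⟨2 * (l : ℕ), by have := l.2; omega⟩ < r i := by rw [hi]; exact hx.1
      have h2 : r i < r ⟨2 * (l : ℕ) + 1, by have := l.2; omega⟩ := by rw [hi]; exact hx.2
      rw [hrmono.lt_iff_lt] at h1 h2
      simp [Fin.lt_def] at h1 h2
      omega
    have := hpeval x
    have hlt : p.eval x < 0 := lt_of_le_of_ne hle hne
    linarith
  have hrootA : ∀ l : Fin q, p.eval (A l) = 0 := fun l => (hrootmem _).mpr ⟨_, rfl⟩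
  have hrootB : ∀ l : Fin q, p.eval (B l) = 0 := fun l => (hrootmem _).mpr ⟨_, rfl⟩
  have hvalA : ∀ l : Fin q, (v.eval (A l)) ^ 2 = 4 * g := by
    intro l
    have h1 := hpeval (A l)
    rw [hrootA l] at h1
    linarith
  have hvalB : ∀ l : Fin q, (v.eval (B l)) ^ 2 = 4 * g := by
    intro l
    have h1 := hpeval (B l)
    rw [hrootB l] at h1
    linarith
  have hv'ne : ∀ l : Fin q, ∀ x ∈ Set.Icc (A l) (B l), (Polynomial.derivative v).eval x ≠ 0 := by
    intro l x hx
    rcases eq_or_lt_of_le hx.1 with h1 | h1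
    · rw [← h1]; exact hend _ (hrootA l)
    rcases eq_or_lt_of_le hx.2 with h2 | h2
    · rw [h2]; exact hend _ (hrootB l)
    intro hv0
    have := hcrit x hv0
    have := hin l x ⟨h1, h2⟩
    linarith
  -- the density function
  set G : ℝ → ℝ := fun lam =>
    |(Polynomial.derivative v).eval lam| * Real.sqrt (4 * g - (v.eval lam) ^ 2)
      / (2 * Real.pi * g * q) with hGdef
  have hbpG : bpDensity q v g = G := funext fun lam => bpDensity_eq q v g lam
  have hGcont : Continuous G := by
    apply Continuous.div_const
    exact ((Polynomial.continuous _).abs).mul (Continuous.sqrt (continuous_const.sub ((Polynomial.continuous v).pow 2)))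
  have hGnonneg : ∀ lam : ℝ, 0 ≤ G lam := by
    intro lam
    apply div_nonneg (mul_nonneg (abs_nonneg _) (Real.sqrt_nonneg _))
    positivity
  have hGzero : ∀ x : ℝ, ¬((v.eval x) ^ 2 ≤ 4 * g) → G x = 0 := by
    intro x hx
    push_neg at hx
    rw [hGdef]
    simp only
    rw [Real.sqrt_eq_zero'.mpr (by linarith), mul_zero, zero_div]
  have hsupp : HasCompactSupport G := by
    apply HasCompactSupport.intro (isCompact_Icc
      (a := A ⟨0, by omega⟩) (b := B ⟨q - 1, by omega⟩))
    intro x hx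
    by_contra hGx
    have hxσ : (v.eval x) ^ 2 ≤ 4 * g := by
      by_contra h
      exact hGx (hGzero x h)
    have hxmem : x ∈ ⋃ l : Fin q, Set.Icc (A l) (B l) := by rw [← hσ]; exact hxσ
    rw [Set.mem_iUnion] at hxmem
    obtain ⟨l, hl⟩ := hxmem
    apply hx
    constructor
    · exact le_trans (hAmono ⟨0, by omega⟩ l (by simp)) hl.1
    · exact le_trans hl.2 (hBmono l ⟨q - 1, by omega⟩ (by simp; have := l.2; omega))
  have hGint : Integrable G := hGcont.integrable_of_hasCompactSupport hsupp
  -- mass of each band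
  have hmass : ∀ l : Fin q, (∫ lam in Set.Icc (A l) (B l), G lam) = 1 / q := by
    intro l
    have hbint := band_mass v g hg (A l) (B l) (hAB l) (hv'ne l) (hin l) (hvalA l) (hvalB l)
    rw [MeasureTheory.integral_Icc_eq_integral_Ioc, ← intervalIntegral.integral_of_le (hAB l).le]
    calc (∫ x in (A l)..(B l), G x)
        = (∫ x in (A l)..(B l), |(Polynomial.derivative v).eval x|
            * Real.sqrt (4 * g - (v.eval x) ^ 2)) / (2 * Real.pi * g * q) := by
          rw [← intervalIntegral.integral_div]
      _ = 2 * Real.pi * g / (2 * Real.pi * g * q) := by rw [hbint]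
      _ = 1 / q := by
          rw [div_eq_div_iff (by positivity : (0:ℝ) < 2 * Real.pi * g * q).ne'
            (by positivity : (0:ℝ) < (q:ℝ)).ne']
          ring
  have hdisjIcc : ∀ l m : Fin q, l ≠ m →
      Disjoint (Set.Icc (A l) (B l)) (Set.Icc (A m) (B m)) := by
    intro l m hlm
    rcases Nat.lt_or_ge (l : ℕ) (m : ℕ) with h | h
    · rw [Set.disjoint_left]
      intro x hx hx'
      have := hBltA l m h
      have := hx.2
      have := hx'.1
      linarith
    · have h' : (m : ℕ) < (l : ℕ) := by
        rcases Nat.lt_or_ge (m : ℕ) (l : ℕ) with h2 | h2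
        · exact h2
        · exact absurd (Fin.ext (by omega : (l : ℕ) = (m : ℕ))) hlm
      rw [Set.disjoint_right]
      intro x hx hx'
      have := hBltA m l h'
      have := hx.2
      have := hx'.1
      linarith
  have hqR : (0:ℝ) < q := by positivity
  -- total mass
  have htotal : (∫ lam : ℝ, G lam) = 1 := by
    rw [← MeasureTheory.setIntegral_eq_integral_of_forall_compl_eq_zero
      (s := {lam : ℝ | (v.eval lam) ^ 2 ≤ 4 * g}) (fun x hx => hGzero x hx)]
    rw [hσ]
    rw [show (⋃ l : Fin q, Set.Icc (A l) (B l))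
        = ⋃ l ∈ (Finset.univ : Finset (Fin q)), Set.Icc (A l) (B l) by simp]
    rw [MeasureTheory.integral_biUnion_finset Finset.univ (fun _ _ => measurableSet_Icc)
      (fun l _ m _ hlm => hdisjIcc l m hlm) (fun l _ => hGint.integrableOn)]
    rw [Finset.sum_congr rfl (fun l _ => hmass l)]
    rw [Finset.sum_const, Finset.card_univ, Fintype.card_fin, nsmul_eq_mul]
    field_simp
  refine ⟨A, B, hAB, hBA, hσ, ?_, ?_, ?_, ?_⟩
  · intro lam; rw [hbpG]; exact hGnonneg lam
  · rw [hbpG]; exact htotal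
  · intro l; rw [hbpG]; exact hmass l
  · intro k hk
    rw [hbpG]
    set s : Set ℝ := ⋃ l ∈ Finset.univ.filter (fun l : Fin q => (k : ℕ) ≤ (l : ℕ)),
      Set.Icc (A l) (B l) with hsdef
    have hsub : s ⊆ Set.Ici (A k) := by
      intro x hx
      rw [hsdef, Set.mem_iUnion] at hx
      obtain ⟨l, hl⟩ := hx
      rw [Set.mem_iUnion] at hl
      obtain ⟨hlf, hl⟩ := hl
      rw [Finset.mem_filter] at hlf
      exact le_trans (hAmono k l hlf.2) hl.1
    have hsm : MeasurableSet s :=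
      Finset.measurableSet_biUnion _ (fun _ _ => measurableSet_Icc)
    have hdecomp : Set.Ici (A k) = s ∪ (Set.Ici (A k) \ s) := (Set.union_diff_cancel hsub).symm
    rw [hdecomp, MeasureTheory.setIntegral_union Set.disjoint_sdiff_right
      (measurableSet_Ici.diff hsm) hGint.integrableOn hGint.integrableOn]
    have hzero : (∫ lam in Set.Ici (A k) \ s, G lam) = 0 := by
      apply MeasureTheory.setIntegral_eq_zero_of_forall_eq_zero
      intro x hx
      by_contra hGx
      have hxσ : (v.eval x) ^ 2 ≤ 4 * g := by
        by_contra h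
        exact hGx (hGzero x h)
      have hxmem : x ∈ ⋃ l : Fin q, Set.Icc (A l) (B l) := by rw [← hσ]; exact hxσ
      rw [Set.mem_iUnion] at hxmem
      obtain ⟨l, hl⟩ := hxmem
      rcases Nat.lt_or_ge (l : ℕ) (k : ℕ) with h | h
      · have h1 := hBltA l k h
        have h2 := hx.1
        rw [Set.mem_Ici] at h2
        have := hl.2
        linarith
      · apply hx.2
        rw [hsdef, Set.mem_iUnion]
        refine ⟨l, ?_⟩
        rw [Set.mem_iUnion]
        exact ⟨Finset.mem_filter.mpr ⟨Finset.mem_univ l, h⟩, hl⟩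
    rw [hzero, add_zero, hsdef]
    rw [MeasureTheory.integral_biUnion_finset _ (fun _ _ => measurableSet_Icc)
      (fun l hl m hm hlm => hdisjIcc l m hlm) (fun l _ => hGint.integrableOn)]
    rw [Finset.sum_congr rfl (fun l _ => hmass l)]
    rw [Finset.sum_const, card_filter_ge_fin q (k : ℕ) (le_of_lt k.2), nsmul_eq_mul]
    rw [Nat.cast_sub (le_of_lt k.2)]
    field_simp
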